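/- Assume (A1)-(A4), (B1), (B2), (B3) and (B4). Then the mountain pass value over the constraint M equals the infimum of J over the Nehari–Pankov set: c_M = c_N, where c_M := inf_{γ ∈ Γ} sup_{t ∈ [0,1]} J(γ(t)) with Γ := {γ ∈ C([0,1], M) : γ(0) = 0, ‖γ(1)⁺‖ > r, J(γ(1)) < 0}, and c_N := inf_N J. -/

import Mathlib

open Filter Topology

noncomputable section

variable {H W : Type*} [NormedAddCommGroup H] [InnerProductSpace ℝ H] [CompleteSpace H]
  [NormedAddCommGroup W] [NormedSpace ℝ W] [CompleteSpace W]

/-- `uₙ` T-converges to `l`: `uₙ⁺ → l⁺` in the norm of `H` and `ũₙ ⇀ l̃` weakly in `W`. -/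
def TConv (u : ℕ → H × W) (l : H × W) : Prop :=
  Tendsto (fun n => (u n).1) atTop (𝓝 l.1) ∧
    ∀ φ : W →L[ℝ] ℝ, Tendsto (fun n => φ (u n).2) atTop (𝓝 (φ l.2))

/-- The Nehari–Pankov set
`N = {u ≠ 0 : J(u) > 0 and J'(u)[w] = 0 for all w ∈ ℝu + X̃}`. -/
def NehariPankov (J : H × W → ℝ) : Set (H × W) :=
  {u | u ≠ 0 ∧ 0 < J u ∧ ∀ (s : ℝ) (v : W), fderiv ℝ J u (s • u + ((0 : H), v)) = 0}

/-- The natural constraint `M = {u : I'(u)[v] = 0 for all v ∈ X̃}`. -/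
def NatConstraint (I : H × W → ℝ) : Set (H × W) :=
  {u | ∀ v : W, fderiv ℝ I u ((0 : H), v) = 0}


open NormedSpace

section ES

variable {E : Type*} [NormedAddCommGroup E] [NormedSpace ℝ E]

/-- Separation of a point from a closed subspace. -/
lemma aux_sep (Y : Submodule ℝ E) (hY : IsClosed (Y : Set E)) {x : E} (hx : x ∉ Y) :
    ∃ φ : E →L[ℝ] ℝ, (∀ z ∈ Y, φ z = 0) ∧ φ x ≠ 0 := by
  obtain ⟨f, u, hfY, hfx⟩ := geometric_hahn_banach_closed_point (Y.convex) hY hx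
  have hf0 : ∀ z ∈ Y, f z = 0 := by
    intro z hz
    by_contra hne
    have h1 : f (((u + 1) / f z) • z) < u := hfY _ (Y.smul_mem _ hz)
    rw [map_smul] at h1
    simp only [smul_eq_mul] at h1
    rw [div_mul_cancel₀ _ hne] at h1
    linarith
  have hu : 0 < u := by simpa using hfY 0 (Y.zero_mem)
  exact ⟨f, hf0, by intro h0; rw [h0] at hfx; linarith⟩

/-- A closed subspace of a reflexive space is reflexive. -/
lemma aux_subspace_reflexive
    (hrefl : Function.Surjective (inclusionInDoubleDual ℝ E)) (Y : Submodule ℝ E)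
    (hY : IsClosed (Y : Set E)) :
    Function.Surjective (inclusionInDoubleDual ℝ ↥Y) := by
  intro F
  -- restriction map
  let res : StrongDual ℝ E →L[ℝ] StrongDual ℝ ↥Y :=
    (ContinuousLinearMap.compL ℝ ↥Y E ℝ).flip Y.subtypeL
  have hres : ∀ (φ : StrongDual ℝ E) (z : ↥Y), res φ z = φ z := fun φ z => rfl
  obtain ⟨w₀, hw₀⟩ := hrefl (F.comp res)
  have hw₀mem : w₀ ∈ Y := by
    by_contra hxY
    obtain ⟨φ, hφY, hφx⟩ := aux_sep Y hY hxY
    have h1 : res φ = 0 := by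
      ext z; simpa [hres] using hφY z z.2
    have h2 : (inclusionInDoubleDual ℝ E w₀) φ = F.comp res φ := by rw [hw₀]
    rw [ContinuousLinearMap.comp_apply, h1] at h2
    simp only [map_zero] at h2
    exact hφx (by simpa [NormedSpace.dual_def] using h2)
  refine ⟨⟨w₀, hw₀mem⟩, ?_⟩
  ext ψ
  obtain ⟨g, hg, -⟩ := exists_extension_norm_eq Y ψ
  have hgres : res g = ψ := by ext z; exact hg z
  have : (inclusionInDoubleDual ℝ E w₀) g = F.comp res g := by rw [hw₀]
  rw [ContinuousLinearMap.comp_apply, hgres] at this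
  have hgw : g w₀ = ψ ⟨w₀, hw₀mem⟩ := hg ⟨w₀, hw₀mem⟩
  simpa [NormedSpace.dual_def, hgw] using this

/-- If the dual is separable then the space is separable. -/
lemma aux_sep_of_dual_sep
    [TopologicalSpace.SeparableSpace (StrongDual ℝ E)] :
    TopologicalSpace.SeparableSpace E := by
  obtain ⟨D, Dcnt, Ddense⟩ := TopologicalSpace.exists_countable_dense (StrongDual ℝ E)
  have hex : ∀ f : StrongDual ℝ E, f ≠ 0 → ∃ x : E, ‖x‖ < 1 ∧ ‖f‖ / 2 < ‖f x‖ := by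
    intro f hf
    exact f.exists_lt_apply_of_lt_opNorm (by
      have : 0 < ‖f‖ := norm_pos_iff.mpr hf
      linarith)
  classical
  choose! xf hxf1 hxf2 using hex
  set S : Submodule ℝ E := (Submodule.span ℝ (xf '' D)).topologicalClosure with hS
  have hStop : S = ⊤ := by
    by_contra hne
    obtain ⟨x, hxS⟩ : ∃ x : E, x ∉ S := by
      by_contra hall
      push_neg at hall
      exact hne (Submodule.eq_top_iff'.2 hall)
    obtain ⟨φ, hφS, hφx⟩ := aux_sep S (Submodule.isClosed_topologicalClosure _) hxS
    have hφ0 : φ ≠ 0 := by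
      intro h0; rw [h0] at hφx; exact hφx rfl
    set ψ : StrongDual ℝ E := ‖φ‖⁻¹ • φ with hψdef
    have hψnorm : ‖ψ‖ = 1 := by
      rw [hψdef, norm_smul, norm_inv, norm_norm, inv_mul_cancel₀ (norm_ne_zero_iff.2 hφ0)]
    have hψS : ∀ z ∈ S, ψ z = 0 := by
      intro z hz
      rw [hψdef]
      simp [hφS z hz]
    obtain ⟨f, hfD, hfψ⟩ : ∃ f ∈ D, dist f ψ < 1/4 := by
      have := Metric.mem_closure_iff.1 (Ddense.closure_eq ▸ (Set.mem_univ ψ) :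
        ψ ∈ closure D) (1/4) (by norm_num)
      obtain ⟨f, hfD, hd⟩ := this
      exact ⟨f, hfD, by rwa [dist_comm]⟩
    have hdist : ‖f - ψ‖ < 1/4 := by rw [← dist_eq_norm]; exact hfψ
    have hfnorm : 3/4 ≤ ‖f‖ := by
      have h1 : ‖ψ‖ ≤ ‖f‖ + ‖f - ψ‖ := by
        calc ‖ψ‖ = ‖f - (f - ψ)‖ := by rw [sub_sub_cancel]
          _ ≤ ‖f‖ + ‖f - ψ‖ := norm_sub_le _ _
      rw [hψnorm] at h1
      linarith
    have hfne : f ≠ 0 := by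
      intro h0
      rw [h0, norm_zero] at hfnorm; linarith
    have hx1 := hxf1 f hfne
    have hx2 := hxf2 f hfne
    have hxfS : xf f ∈ S := by
      apply Submodule.le_topologicalClosure
      exact Submodule.subset_span ⟨f, hfD, rfl⟩
    have hψxf : ψ (xf f) = 0 := hψS _ hxfS
    have hcalc : ‖f (xf f)‖ ≤ 1/4 := by
      have : f (xf f) = (f - ψ) (xf f) := by
        simp [hψxf]
      rw [this]
      calc ‖(f - ψ) (xf f)‖ ≤ ‖f - ψ‖ * ‖xf f‖ := (f - ψ).le_opNorm _
        _ ≤ ‖f - ψ‖ * 1 := by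
            apply mul_le_mul_of_nonneg_left (le_of_lt hx1) (norm_nonneg _)
        _ ≤ 1/4 := by
            rw [mul_one]
            linarith
    have : 3/8 < ‖f (xf f)‖ := by
      calc (3:ℝ)/8 = (3/4)/2 := by norm_num
        _ ≤ ‖f‖ / 2 := by linarith
        _ < ‖f (xf f)‖ := hx2
    linarith
  have hsep : TopologicalSpace.IsSeparable (S : Set E) := by
    apply TopologicalSpace.IsSeparable.closure
    exact ((Dcnt.image xf).isSeparable).span
  rw [hStop] at hsep
  have : TopologicalSpace.IsSeparable (Set.univ : Set E) := by
    simpa [Submodule.top_coe] using hsep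
  exact TopologicalSpace.isSeparable_univ_iff.1 this

end ES

section WSC

set_option maxHeartbeats 1000000
set_option synthInstance.maxHeartbeats 400000

variable {E : Type*} [NormedAddCommGroup E] [NormedSpace ℝ E]

/-- Bounded sequences in a reflexive space have weakly convergent subsequences. -/
lemma weak_seq_compact
    (hrefl : Function.Surjective (inclusionInDoubleDual ℝ E))
    (y : ℕ → E) (C : ℝ) (hC : ∀ n, ‖y n‖ ≤ C) :
    ∃ x : E, ∃ ψ : ℕ → ℕ, StrictMono ψ ∧
      ∀ φ : E →L[ℝ] ℝ, Tendsto (fun n => φ (y (ψ n))) atTop (𝓝 (φ x)) := by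
  classical
  set Y : Submodule ℝ E := (Submodule.span ℝ (Set.range y)).topologicalClosure with hYdef
  have hYc : IsClosed (Y : Set E) := Submodule.isClosed_topologicalClosure _
  have hYrefl := aux_subspace_reflexive hrefl Y hYc
  have hYsep : TopologicalSpace.IsSeparable (Y : Set E) :=
    ((Set.countable_range y).isSeparable).span.closure
  have hsepY : TopologicalSpace.SeparableSpace ↥Y := hYsep.separableSpace
  have hDDsep : TopologicalSpace.SeparableSpace (StrongDual ℝ (StrongDual ℝ ↥Y)) := by
    have hrange : Set.range (inclusionInDoubleDual ℝ ↥Y) = Set.univ := hYrefl.range_eq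
    have h2 := TopologicalSpace.isSeparable_range (inclusionInDoubleDual ℝ ↥Y).continuous
    rw [hrange] at h2
    exact TopologicalSpace.isSeparable_univ_iff.1 h2
  have hDsep : TopologicalSpace.SeparableSpace (StrongDual ℝ ↥Y) := aux_sep_of_dual_sep (E := StrongDual ℝ ↥Y)
  have hne : Nonempty (StrongDual ℝ ↥Y) := ⟨0⟩
  set φk : ℕ → StrongDual ℝ ↥Y := TopologicalSpace.denseSeq (StrongDual ℝ ↥Y) with hφkdef
  have hφk : DenseRange φk := TopologicalSpace.denseRange_denseSeq _
  set C' : ℝ := max C 0 with hC'def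
  have hC'0 : (0:ℝ) ≤ C' := le_max_right _ _
  have hyY : ∀ n, y n ∈ Y := fun n =>
    Submodule.le_topologicalClosure _ (Submodule.subset_span (Set.mem_range_self n))
  set yY : ℕ → ↥Y := fun n => ⟨y n, hyY n⟩ with hyYdef
  have hyYnorm : ∀ n, ‖yY n‖ ≤ C' := fun n => le_trans (hC n) (le_max_left _ _)
  set K : Set (ℕ → ℝ) := Set.pi Set.univ (fun k => Set.Icc (-(‖φk k‖ * C')) (‖φk k‖ * C'))
    with hKdef
  have hK : IsCompact K := isCompact_univ_pi (fun k => isCompact_Icc)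
  have hgK : ∀ n, (fun k => φk k (yY n)) ∈ K := by
    intro n
    intro k _
    have h1 : ‖φk k (yY n)‖ ≤ ‖φk k‖ * C' :=
      le_trans ((φk k).le_opNorm _) (mul_le_mul_of_nonneg_left (hyYnorm n) (norm_nonneg _))
    rw [Real.norm_eq_abs, abs_le] at h1
    exact ⟨by linarith [h1.1], h1.2⟩
  obtain ⟨L, _, ψ, hψmono, hψtend⟩ := hK.tendsto_subseq hgK
  have hkconv : ∀ k, Tendsto (fun n => φk k (yY (ψ n))) atTop (𝓝 (L k)) := by
    intro k
    have := ((continuous_apply k).tendsto L).comp hψtend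
    exact this
  have hconv : ∀ g : StrongDual ℝ ↥Y, ∃ l, Tendsto (fun n => g (yY (ψ n))) atTop (𝓝 l) := by
    intro g
    apply cauchySeq_tendsto_of_complete
    rw [Metric.cauchySeq_iff]
    intro ε hε
    obtain ⟨k, hk⟩ : ∃ k, dist g (φk k) < ε/(4*(C'+1)) := by
      obtain ⟨k, hk⟩ := hφk.exists_dist_lt g (show (0:ℝ) < ε/(4*(C'+1)) by positivity)
      exact ⟨k, hk⟩
    have hcau : CauchySeq (fun n => φk k (yY (ψ n))) := (hkconv k).cauchySeq
    rw [Metric.cauchySeq_iff] at hcau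
    obtain ⟨N, hN⟩ := hcau (ε/2) (by positivity)
    refine ⟨N, fun m hm n hn => ?_⟩
    have est : ∀ i : ℕ, ‖g (yY i) - φk k (yY i)‖ ≤ ε/4 := by
      intro i
      have h1 : ‖(g - φk k) (yY i)‖ ≤ ‖g - φk k‖ * ‖yY i‖ := (g - φk k).le_opNorm _
      have h2 : ‖g - φk k‖ * ‖yY i‖ ≤ ‖g - φk k‖ * C' :=
        mul_le_mul_of_nonneg_left (hyYnorm i) (norm_nonneg (g - φk k))
      have h3 : ‖g - φk k‖ < ε/(4*(C'+1)) := by rw [← dist_eq_norm g (φk k)]; exact hk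
      have h4 : ‖g - φk k‖ * C' ≤ ε/(4*(C'+1)) * C' :=
        mul_le_mul_of_nonneg_right (le_of_lt h3) hC'0
      have h5 : ε/(4*(C'+1)) * C' ≤ ε/4 := by
        rw [div_mul_eq_mul_div, div_le_div_iff₀ (by positivity) (by norm_num)]
        ring_nf
        nlinarith [hC'0, le_of_lt hε]
      have h6 : (g - φk k) (yY i) = g (yY i) - φk k (yY i) := rfl
      rw [h6] at h1
      linarith
    have hmid : dist (φk k (yY (ψ m))) (φk k (yY (ψ n))) < ε/2 := hN m hm n hn
    have e1 := est (ψ m)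
    have e2 := est (ψ n)
    rw [Real.dist_eq] at hmid ⊢
    rw [Real.norm_eq_abs] at e1 e2
    have t1 := abs_sub_le (g (yY (ψ m))) (φk k (yY (ψ m))) (g (yY (ψ n)))
    have t2 := abs_sub_le (φk k (yY (ψ m))) (φk k (yY (ψ n))) (g (yY (ψ n)))
    have e2' : |φk k (yY (ψ n)) - g (yY (ψ n))| ≤ ε/4 := by
      rw [abs_sub_comm]; exact e2
    linarith
  choose Lf hLf using hconv
  have hadd : ∀ g₁ g₂ : StrongDual ℝ ↥Y, Lf (g₁ + g₂) = Lf g₁ + Lf g₂ := by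
    intro g₁ g₂
    have h1 : Tendsto (fun n => (g₁ + g₂) (yY (ψ n))) atTop (𝓝 (Lf g₁ + Lf g₂)) := by
      have h0 := (hLf g₁).add (hLf g₂)
      simp only [ContinuousLinearMap.add_apply]
      exact h0
    exact tendsto_nhds_unique (hLf _) h1
  have hsmul : ∀ (c : ℝ) (g : StrongDual ℝ ↥Y), Lf (c • g) = c * Lf g := by
    intro c g
    have h1 : Tendsto (fun n => (c • g) (yY (ψ n))) atTop (𝓝 (c * Lf g)) := by
      have h0 := (hLf g).const_mul c
      simp only [ContinuousLinearMap.coe_smul', Pi.smul_apply, smul_eq_mul]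
      exact h0
    exact tendsto_nhds_unique (hLf _) h1
  set Flin : StrongDual ℝ ↥Y →ₗ[ℝ] ℝ :=
    { toFun := Lf
      map_add' := hadd
      map_smul' := by intro c g; simpa using hsmul c g } with hFlin
  have hFbdd : ∀ g : StrongDual ℝ ↥Y, ‖Flin g‖ ≤ C' * ‖g‖ := by
    intro g
    have h1 : Tendsto (fun n => ‖g (yY (ψ n))‖) atTop (𝓝 ‖Lf g‖) := (hLf g).norm
    apply le_of_tendsto h1
    apply Filter.Eventually.of_forall
    intro n
    calc ‖g (yY (ψ n))‖ ≤ ‖g‖ * ‖yY (ψ n)‖ := g.le_opNorm _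
      _ ≤ ‖g‖ * C' := mul_le_mul_of_nonneg_left (hyYnorm _) (norm_nonneg g)
      _ = C' * ‖g‖ := mul_comm _ _
  set F : StrongDual ℝ (StrongDual ℝ ↥Y) := LinearMap.mkContinuous (E := StrongDual ℝ ↥Y) Flin C' hFbdd with hFdef
  obtain ⟨ylim, hylim⟩ := hYrefl F
  refine ⟨(ylim : E), ψ, hψmono, ?_⟩
  intro φ
  set g : StrongDual ℝ ↥Y := φ.comp Y.subtypeL with hgdef
  have h1 : Tendsto (fun n => g (yY (ψ n))) atTop (𝓝 (Lf g)) := hLf g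
  have h2 : Lf g = g ylim := by
    have h3 : (inclusionInDoubleDual ℝ ↥Y ylim) g = F g := by rw [hylim]
    have h4 : F g = Lf g := rfl
    rw [h4] at h3
    exact h3.symm
  have h5 : ∀ n, g (yY (ψ n)) = φ (y (ψ n)) := fun n => rfl
  have h6 : g ylim = φ (ylim : E) := rfl
  rw [h2, h6] at h1
  simpa only [h5] using h1

end WSC

/-- Bundle of all standing hypotheses. -/
structure GS (I J : H × W → ℝ) (r a : ℝ) : Prop where
  refl : Function.Surjective (inclusionInDoubleDual ℝ W)
  hJ : ∀ u : H × W, J u = 1 / 2 * ‖u.1‖ ^ 2 - I u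
  C1 : ContDiff ℝ 1 I
  A1 : ∀ u : H × W, 0 ≤ I u
  I0 : I 0 = 0
  A2 : ∀ (u : ℕ → H × W) (l : H × W), TConv u l →
    I l ≤ Filter.liminf (fun n => I (u n)) atTop
  A3 : ∀ (u : ℕ → H × W) (l : H × W), TConv u l →
    Tendsto (fun n => I (u n)) atTop (𝓝 (I l)) → Tendsto u atTop (𝓝 l)
  hr : 0 < r
  ha : a = sInf {c : ℝ | ∃ h : H, ‖h‖ = r ∧ c = J (h, (0 : W))}
  hapos : 0 < a
  B1 : ∀ u : ℕ → H × W, Tendsto (fun n => ‖u n‖) atTop atTop →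
    Tendsto (fun n => ‖(u n).1‖ + I (u n)) atTop atTop
  B2 : ∀ (t : ℕ → ℝ) (u : ℕ → H × W) (u₀ : H), u₀ ≠ 0 → Tendsto t atTop atTop →
    Tendsto (fun n => (u n).1) atTop (𝓝 u₀) →
    Tendsto (fun n => I (t n • u n) / t n ^ 2) atTop atTop
  B3 : ∀ u ∈ NehariPankov J, ∀ t : ℝ, 0 ≤ t → ∀ v : W, t • u + ((0 : H), v) ≠ u →
    (t ^ 2 - 1) / 2 * fderiv ℝ I u u + t * fderiv ℝ I u ((0 : H), v)
      + I u - I (t • u + ((0 : H), v)) < 0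
  B4 : ∀ u ∈ NatConstraint I, ∀ v : W, v ≠ 0 → I u < I (u + ((0 : H), v))

set_option maxHeartbeats 1000000

namespace GS

variable {I J : H × W → ℝ} {r a : ℝ} (hS : GS I J r a)

include hS

theorem Idiff : Differentiable ℝ I := hS.C1.differentiable one_ne_zero

theorem Icont : Continuous I := hS.Idiff.continuous

theorem Jfun : J = fun u : H × W => 1 / 2 * ‖u.1‖ ^ 2 - I u := funext hS.hJ

theorem Jcont : Continuous J := by
  rw [hS.Jfun]
  exact (continuous_const.mul ((continuous_fst.norm).pow 2)).sub hS.Icont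

theorem J0 : J 0 = 0 := by
  rw [hS.hJ 0, Prod.fst_zero, norm_zero, hS.I0]; ring

theorem hJd (u : H × W) :
    HasFDerivAt J ((innerSL ℝ u.1).comp (ContinuousLinearMap.fst ℝ H W) - fderiv ℝ I u) u := by
  have hn : HasFDerivAt (fun u : H × W => ‖u.1‖ ^ 2)
      (2 • ((innerSL ℝ u.1).comp (ContinuousLinearMap.fst ℝ H W))) u :=
    (hasFDerivAt_fst (p := u)).norm_sq
  have h2 := (hn.const_mul (1/2 : ℝ)).sub (hS.Idiff u).hasFDerivAt
  have h3 : (1/2 : ℝ) • (2 • ((innerSL ℝ u.1).comp (ContinuousLinearMap.fst ℝ H W)))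
      = (innerSL ℝ u.1).comp (ContinuousLinearMap.fst ℝ H W) := by
    refine ContinuousLinearMap.ext fun x => ?_
    simp [two_smul]
    ring
  rw [h3] at h2
  rw [hS.Jfun]
  exact h2

theorem Jd_apply (u x : H × W) :
    fderiv ℝ J u x = (inner ℝ u.1 x.1 : ℝ) - fderiv ℝ I u x := by
  rw [(hS.hJd u).fderiv]
  simp [ContinuousLinearMap.sub_apply]

theorem min_mem_M {h : H} {w : W} (hmin : ∀ w', I (h, w) ≤ I (h, w')) :
    ((h, w) : H × W) ∈ NatConstraint I := by
  intro v
  have heq : (fun v : W => ((h, w) : H × W) + ((0 : H), v)) = fun v : W => ((h, w + v) : H × W) := by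
    funext v; simp [Prod.ext_iff]
  have hA : HasFDerivAt (fun v : W => ((h, w + v) : H × W)) (ContinuousLinearMap.inr ℝ H W) 0 := by
    have := (ContinuousLinearMap.inr ℝ H W).hasFDerivAt (x := (0 : W))
    have h2 := this.const_add ((h, w) : H × W)
    rw [show (fun x : W => ((h,w) : H × W) + (ContinuousLinearMap.inr ℝ H W) x)
        = fun v : W => ((h, w + v) : H × W) from by funext v; simp [Prod.ext_iff]] at h2
    exact h2
  have hg : HasFDerivAt (fun v : W => I (h, w + v))
      ((fderiv ℝ I (h, w)).comp (ContinuousLinearMap.inr ℝ H W)) 0 := by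
    have hI : HasFDerivAt I (fderiv ℝ I (h, w)) ((fun v : W => ((h, w + v) : H × W)) 0) := by
      simpa using (hS.Idiff (h, w)).hasFDerivAt
    exact hI.comp 0 hA
  have hloc : IsLocalMin (fun v : W => I (h, w + v)) 0 := by
    apply IsMinOn.isLocalMin (s := Set.univ)
    · intro v _
      simpa using hmin (w + v)
    · exact Filter.univ_mem
  have h0 := hloc.hasFDerivAt_eq_zero hg
  have := congrArg (fun T => T v) h0
  simpa using this

theorem M_min {u : H × W} (hu : u ∈ NatConstraint I) : ∀ w', I u ≤ I (u.1, w') := by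
  intro w'
  by_cases hw : w' = u.2
  · rw [hw]
  · have hv : w' - u.2 ≠ 0 := sub_ne_zero.2 hw
    have := hS.B4 u hu _ hv
    have heq : u + ((0 : H), w' - u.2) = (u.1, w') := by
      ext <;> simp
    rw [heq] at this
    exact le_of_lt this

theorem M_unique {u u' : H × W} (hu : u ∈ NatConstraint I) (hu' : u' ∈ NatConstraint I)
    (h1 : u.1 = u'.1) : u = u' := by
  by_contra hne
  have h2 : u.2 ≠ u'.2 := by
    intro h2; exact hne (Prod.ext h1 h2)
  have hlt1 : I u < I (u.1, u'.2) := by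
    have := hS.B4 u hu (u'.2 - u.2) (sub_ne_zero.2 (Ne.symm h2))
    have heq : u + ((0 : H), u'.2 - u.2) = (u.1, u'.2) := by ext <;> simp
    rwa [heq] at this
  have hlt2 : I u' < I (u'.1, u.2) := by
    have := hS.B4 u' hu' (u.2 - u'.2) (sub_ne_zero.2 h2)
    have heq : u' + ((0 : H), u.2 - u'.2) = (u'.1, u.2) := by ext <;> simp
    rwa [heq] at this
  have e1 : ((u.1, u'.2) : H × W) = u' := by rw [h1]
  have e2 : ((u'.1, u.2) : H × W) = (u.1, u.2) := by rw [h1]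
  rw [e1] at hlt1
  rw [e2] at hlt2
  simp only [Prod.mk.eta] at hlt2
  linarith

theorem exists_min : ∀ h : H, ∃ w : W, ∀ w', I (h, w) ≤ I (h, w') := by
  intro h
  set S : Set ℝ := Set.range fun w : W => I (h, w) with hSdef
  have hbne : S.Nonempty := ⟨_, Set.mem_range_self 0⟩
  have hbdd : BddBelow S := ⟨0, by rintro x ⟨w, rfl⟩; exact hS.A1 _⟩
  set b : ℝ := sInf S with hbdef
  have hble : ∀ w, b ≤ I (h, w) := fun w => csInf_le hbdd ⟨w, rfl⟩
  obtain ⟨xseq, -, hxtend, hxmem⟩ := exists_seq_tendsto_sInf hbne hbdd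
  choose wseq hwseq using hxmem
  have hev : ∀ᶠ n in atTop, I (h, wseq n) ≤ b + 1 := by
    have h1 := hxtend.eventually_le_const (show b < b + 1 by linarith)
    filter_upwards [h1] with n hn
    exact le_trans (le_of_eq (hwseq n)) hn
  obtain ⟨N₀, hN₀⟩ := Filter.eventually_atTop.1 hev
  set w' : ℕ → W := fun n => wseq (N₀ + n) with hw'def
  have hw'le : ∀ n, I (h, w' n) ≤ b + 1 := fun n => hN₀ _ (Nat.le_add_right _ _)
  have hbddw : ∃ C, ∀ n, ‖w' n‖ ≤ C := by
    by_contra hc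
    push_neg at hc
    choose nf hnf using hc
    set u : ℕ → H × W := fun m => (h, w' (nf m)) with hudef
    have h1 : Tendsto (fun m => ‖u m‖) atTop atTop := by
      apply tendsto_atTop_mono (fun m => ?_) tendsto_natCast_atTop_atTop
      calc ((m : ℝ)) ≤ ‖w' (nf (m : ℝ) )‖ := le_of_lt (hnf _)
        _ ≤ ‖u m‖ := norm_snd_le ((h, w' (nf (m : ℝ))) : H × W)
    have h2 := hS.B1 u h1
    obtain ⟨m, hm⟩ := (h2.eventually_gt_atTop (‖h‖ + (b + 1))).exists
    have h3 : ‖(u m).1‖ + I (u m) ≤ ‖h‖ + (b + 1) :=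
      add_le_add le_rfl (hw'le (nf m))
    exact absurd h3 (not_le.2 hm)
  obtain ⟨C, hCw⟩ := hbddw
  obtain ⟨wlim, ψ, hψ, hweak⟩ := weak_seq_compact hS.refl w' C hCw
  have hT : TConv (fun n => ((h, w' (ψ n)) : H × W)) (h, wlim) :=
    ⟨tendsto_const_nhds, fun φ => hweak φ⟩
  have hA2 := hS.A2 _ _ hT
  have htend2 : Tendsto (fun n => I (h, w' (ψ n))) atTop (𝓝 b) := by
    have hc1 : Tendsto (fun n => N₀ + ψ n) atTop atTop :=
      tendsto_atTop_mono (fun n => Nat.le_add_left _ _) hψ.tendsto_atTop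
    have hc2 := hxtend.comp hc1
    have : (fun n => xseq (N₀ + ψ n)) = fun n => I (h, w' (ψ n)) := by
      funext n; rw [hw'def]; exact (hwseq _).symm
    rwa [← this]
  have hliminf : Filter.liminf (fun n => I ((h, w' (ψ n)) : H × W)) atTop = b :=
    htend2.liminf_eq
  rw [hliminf] at hA2
  exact ⟨wlim, fun w'' => le_trans hA2 (hble w'')⟩

/-- The slice-minimizer map. -/
noncomputable def md (h : H) : W := (hS.exists_min h).choose

theorem md_min (h : H) : ∀ w', I (h, hS.md h) ≤ I (h, w') := (hS.exists_min h).choose_spec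

theorem md_M (h : H) : ((h, hS.md h) : H × W) ∈ NatConstraint I := hS.min_mem_M (hS.md_min h)

theorem mem_M_iff {u : H × W} : u ∈ NatConstraint I ↔ u = (u.1, hS.md u.1) := by
  constructor
  · intro hu
    exact hS.M_unique hu (hS.md_M u.1) rfl
  · intro hu
    rw [hu]
    exact hS.md_M u.1

theorem md0 : hS.md 0 = 0 := by
  have h0M : ((0 : H × W)) ∈ NatConstraint I := by
    intro v
    have hloc : IsLocalMin I 0 := by
      apply IsMinOn.isLocalMin (s := Set.univ)
      · intro u _
        rw [hS.I0]; exact hS.A1 u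
      · exact Filter.univ_mem
    rw [hloc.fderiv_eq_zero]
    simp
  have := hS.mem_M_iff.1 h0M
  have h2 : ((0 : H × W)) = ((0 : H), hS.md 0) := by
    simpa using this
  exact ((Prod.ext_iff.1 h2).2).symm

/-- The reduced functionals. -/
noncomputable def Ih (h : H) : ℝ := I (h, hS.md h)

noncomputable def Jh (h : H) : ℝ := 1 / 2 * ‖h‖ ^ 2 - hS.Ih h

theorem J_md (h : H) : J (h, hS.md h) = hS.Jh h := by
  rw [hS.hJ]; rfl

theorem Ih_nonneg (h : H) : 0 ≤ hS.Ih h := hS.A1 _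

theorem Ih0 : hS.Ih 0 = 0 := by
  rw [Ih, hS.md0]
  have : ((0 : H), (0 : W)) = (0 : H × W) := rfl
  rw [this, hS.I0]

theorem Jh0 : hS.Jh 0 = 0 := by
  rw [Jh, hS.Ih0]; simp

theorem Jh_le (h : H) : hS.Jh h ≤ 1 / 2 * ‖h‖ ^ 2 := by
  have := hS.Ih_nonneg h
  rw [Jh]; linarith

theorem aSet_facts :
    BddBelow {c : ℝ | ∃ h : H, ‖h‖ = r ∧ c = J (h, (0 : W))} ∧
    {c : ℝ | ∃ h : H, ‖h‖ = r ∧ c = J (h, (0 : W))}.Nonempty := by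
  constructor
  · by_contra hb
    have h1 := Real.sInf_of_not_bddBelow hb
    rw [← hS.ha] at h1
    linarith [hS.hapos]
  · by_contra hne
    rw [Set.not_nonempty_iff_eq_empty] at hne
    have h1 := hS.ha
    rw [hne, Real.sInf_empty] at h1
    linarith [hS.hapos]

theorem exists_sphere : ∃ h₀ : H, ‖h₀‖ = r := by
  obtain ⟨c, hc⟩ := hS.aSet_facts.2
  obtain ⟨h₀, hn, -⟩ := hc
  exact ⟨h₀, hn⟩

theorem a_le_Jh {h : H} (hn : ‖h‖ = r) : a ≤ hS.Jh h := by
  have h1 : a ≤ J (h, (0 : W)) := by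
    rw [hS.ha]; exact csInf_le hS.aSet_facts.1 ⟨h, hn, rfl⟩
  have h3 : hS.Ih h ≤ I (h, (0 : W)) := hS.md_min h 0
  have h2 : J (h, (0 : W)) ≤ hS.Jh h := by
    rw [hS.hJ]
    show 1 / 2 * ‖h‖ ^ 2 - I (h, (0 : W)) ≤ 1 / 2 * ‖h‖ ^ 2 - hS.Ih h
    linarith
  linarith

theorem md_tendsto {h : ℕ → H} {l : H} (hc : Tendsto h atTop (𝓝 l)) :
    Tendsto (fun n => ((h n, hS.md (h n)) : H × W)) atTop (𝓝 (l, hS.md l)) := by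
  apply tendsto_of_subseq_tendsto
  intro ns hns
  have hc1 : Tendsto (fun n => h (ns n)) atTop (𝓝 l) := hc.comp hns
  set g : ℕ → H := fun n => h (ns n) with hgdef
  set w : ℕ → W := fun n => hS.md (g n) with hwdef
  have hub : ∀ n, I (g n, w n) ≤ I (g n, hS.md l) := fun n => hS.md_min _ _
  have hcub : Tendsto (fun n => I (g n, hS.md l)) atTop (𝓝 (hS.Ih l)) := by
    have h2 : Tendsto (fun n => ((g n, hS.md l) : H × W)) atTop (𝓝 (l, hS.md l)) :=
      hc1.prodMk_nhds tendsto_const_nhds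
    exact (hS.Icont.tendsto _).comp h2
  obtain ⟨MI, hMI⟩ := hcub.bddAbove_range
  have hIbd : ∀ n, I (g n, w n) ≤ MI := fun n =>
    le_trans (hub n) (hMI (Set.mem_range_self n))
  obtain ⟨Cg, hCg⟩ := hc1.norm.bddAbove_range
  have hwbd : ∃ C, ∀ n, ‖w n‖ ≤ C := by
    by_contra hcb
    push_neg at hcb
    choose nf hnf using hcb
    have h1 : Tendsto (fun m : ℕ => ‖((g (nf (m : ℝ)), w (nf (m : ℝ))) : H × W)‖) atTop atTop :=
      tendsto_atTop_mono (fun m => le_trans (le_of_lt (hnf (m : ℝ)))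
        (norm_snd_le ((g (nf (m : ℝ)), w (nf (m : ℝ))) : H × W)))
        tendsto_natCast_atTop_atTop
    have h2 := hS.B1 _ h1
    obtain ⟨m, hm⟩ := (h2.eventually_gt_atTop (Cg + MI)).exists
    have h3 : ‖((g (nf (m : ℝ)), w (nf (m : ℝ))) : H × W).1‖
        + I (g (nf (m : ℝ)), w (nf (m : ℝ))) ≤ Cg + MI :=
      add_le_add (hCg (Set.mem_range_self _)) (hIbd _)
    exact absurd h3 (not_le.2 hm)
  obtain ⟨C, hCw⟩ := hwbd
  obtain ⟨wlim, ψ, hψ, hweak⟩ := weak_seq_compact hS.refl w C hCw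
  set uu : ℕ → H × W := fun k => ((g (ψ k), w (ψ k)) : H × W) with huudef
  have hT : TConv uu (l, wlim) := ⟨hc1.comp hψ.tendsto_atTop, fun φ => hweak φ⟩
  have hA2 := hS.A2 uu _ hT
  have hIle : ∀ k, I (uu k) ≤ I (g (ψ k), hS.md l) := fun k => hub (ψ k)
  have hcub2 : Tendsto (fun k => I (g (ψ k), hS.md l)) atTop (𝓝 (hS.Ih l)) :=
    hcub.comp hψ.tendsto_atTop
  have hbddabove : Filter.IsBoundedUnder (· ≤ ·) atTop (fun k => I (uu k)) :=
    Filter.isBoundedUnder_of ⟨MI, fun k => hIbd (ψ k)⟩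
  have hbddbelow : Filter.IsBoundedUnder (· ≥ ·) atTop (fun k => I (uu k)) :=
    Filter.isBoundedUnder_of ⟨0, fun k => hS.A1 _⟩
  have hlimsup : Filter.limsup (fun k => I (uu k)) atTop ≤ hS.Ih l := by
    have h4 := Filter.limsup_le_limsup (Filter.Eventually.of_forall hIle)
      (hbddbelow.isCoboundedUnder_le) (hcub2.isBoundedUnder_le)
    rwa [hcub2.limsup_eq] at h4
  have hwmin : hS.Ih l ≤ I (l, wlim) := hS.md_min l wlim
  have hliminf : hS.Ih l ≤ Filter.liminf (fun k => I (uu k)) atTop := le_trans hwmin hA2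
  have htendI : Tendsto (fun k => I (uu k)) atTop (𝓝 (hS.Ih l)) :=
    tendsto_of_le_liminf_of_limsup_le hliminf hlimsup hbddabove hbddbelow
  have hIlw : I (l, wlim) = hS.Ih l := by
    apply le_antisymm _ hwmin
    calc I (l, wlim) ≤ Filter.liminf (fun k => I (uu k)) atTop := hA2
      _ ≤ Filter.limsup (fun k => I (uu k)) atTop :=
          Filter.liminf_le_limsup hbddabove hbddbelow
      _ ≤ hS.Ih l := hlimsup
  have hwlim_md : wlim = hS.md l := by
    have hmin : ∀ w', I (l, wlim) ≤ I (l, w') := fun w' => by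
      rw [hIlw]; exact hS.md_min l w'
    have hMmem := hS.min_mem_M hmin
    have h5 := hS.M_unique hMmem (hS.md_M l) rfl
    exact (Prod.ext_iff.1 h5).2
  have htendI' : Tendsto (fun k => I (uu k)) atTop (𝓝 (I (l, wlim))) := by rwa [hIlw]
  have hA3 := hS.A3 uu (l, wlim) hT htendI'
  rw [hwlim_md] at hA3
  exact ⟨ψ, hA3⟩

theorem md_cont : Continuous (fun h : H => ((h, hS.md h) : H × W)) := by
  rw [continuous_iff_seqContinuous]
  intro x l hxl
  exact hS.md_tendsto hxl

theorem Ih_cont : Continuous hS.Ih := hS.Icont.comp hS.md_cont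

theorem Jh_cont : Continuous hS.Jh := by
  show Continuous fun h => 1 / 2 * ‖h‖ ^ 2 - hS.Ih h
  exact (continuous_const.mul (continuous_norm.pow 2)).sub hS.Ih_cont

theorem B2_cons {l : H} (hl : l ≠ 0) (c : ℝ) :
    ∃ S ε : ℝ, 0 < S ∧ 0 < ε ∧
      ∀ h' : H, ‖h' - l‖ < ε → ∀ s, S ≤ s → hS.Jh (s • h') < c := by
  by_contra hcon
  push_neg at hcon
  have hstep : ∀ n : ℕ, ∃ h' : H, ∃ s : ℝ, ‖h' - l‖ < 1 / (n + 1) ∧ (n + 1 : ℝ) ≤ s ∧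
      c ≤ hS.Jh (s • h') := by
    intro n
    obtain ⟨h', hh', s, hs, hJs⟩ := hcon (n + 1 : ℝ) (1 / (n + 1))
      (by positivity) (by positivity)
    exact ⟨h', s, hh', hs, hJs⟩
  choose hseq sseq hd hsge hJc using hstep
  have hs1 : ∀ n : ℕ, (1 : ℝ) ≤ sseq n := fun n =>
    le_trans (by linarith [Nat.cast_nonneg (α := ℝ) n]) (hsge n)
  have hspos : ∀ n, (0 : ℝ) < sseq n := fun n => lt_of_lt_of_le one_pos (hs1 n)
  have htt : Tendsto sseq atTop atTop :=
    tendsto_atTop_mono (fun n =>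
      le_trans (le_add_of_nonneg_right zero_le_one) (hsge n)) tendsto_natCast_atTop_atTop
  have hht : Tendsto hseq atTop (𝓝 l) := by
    rw [tendsto_iff_norm_sub_tendsto_zero]
    apply squeeze_zero (fun n => norm_nonneg _) (fun n => le_of_lt (hd n))
    exact tendsto_one_div_add_atTop_nhds_zero_nat
  set u : ℕ → H × W := fun n => (hseq n, (sseq n)⁻¹ • hS.md (sseq n • hseq n)) with hudef
  have hB2 := hS.B2 sseq u l hl htt (by
    rw [hudef]; exact hht)
  have hbound : ∀ n, I (sseq n • u n) / sseq n ^ 2 ≤ 1 / 2 * (‖l‖ + 1) ^ 2 + |c| := by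
    intro n
    have he : sseq n • u n = ((sseq n • hseq n, hS.md (sseq n • hseq n)) : H × W) := by
      rw [hudef]
      ext
      · rfl
      · show sseq n • (sseq n)⁻¹ • hS.md (sseq n • hseq n) = _
        rw [smul_inv_smul₀ (ne_of_gt (hspos n))]
    rw [he]
    have hIh : I (sseq n • hseq n, hS.md (sseq n • hseq n)) = hS.Ih (sseq n • hseq n) := rfl
    have hJh : hS.Ih (sseq n • hseq n) = 1 / 2 * ‖sseq n • hseq n‖ ^ 2
        - hS.Jh (sseq n • hseq n) := by
      rw [Jh]; ring
    have hnrm : ‖sseq n • hseq n‖ ^ 2 = sseq n ^ 2 * ‖hseq n‖ ^ 2 := by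
      rw [norm_smul, Real.norm_eq_abs, mul_pow, sq_abs]
    have hhn : ‖hseq n‖ ≤ ‖l‖ + 1 := by
      have h1 := hd n
      have h2 : ‖hseq n‖ ≤ ‖hseq n - l‖ + ‖l‖ := by
        calc ‖hseq n‖ = ‖hseq n - l + l‖ := by rw [sub_add_cancel]
          _ ≤ ‖hseq n - l‖ + ‖l‖ := norm_add_le _ _
      have h3 : 1 / ((n : ℝ) + 1) ≤ 1 := by
        rw [div_le_one (by positivity)]
        linarith [Nat.cast_nonneg (α := ℝ) n]
      linarith
    have hJcn := hJc n
    have hsq : (0:ℝ) < sseq n ^ 2 := pow_pos (hspos n) 2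
    rw [hIh, hJh, div_le_iff₀ hsq]
    have hcl : c ≤ hS.Jh (sseq n • hseq n) := hJcn
    have h4 : 1 / 2 * ‖sseq n • hseq n‖ ^ 2 - hS.Jh (sseq n • hseq n)
        ≤ 1 / 2 * (sseq n ^ 2 * ‖hseq n‖ ^ 2) - c := by
      rw [hnrm]; linarith
    have h5 : 1 / 2 * (sseq n ^ 2 * ‖hseq n‖ ^ 2) ≤ 1 / 2 * (sseq n ^ 2 * (‖l‖ + 1) ^ 2) := by
      have := sq_le_sq' (by linarith [norm_nonneg (hseq n)]) hhn
      nlinarith [hsq]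
    have h6 : -c ≤ |c| := neg_le_abs c
    have hsq1 : (1 : ℝ) ≤ sseq n ^ 2 := by nlinarith [hs1 n]
    have h7 : |c| ≤ |c| * sseq n ^ 2 := le_mul_of_one_le_right (abs_nonneg c) hsq1
    nlinarith
  obtain ⟨n, hn⟩ := (hB2.eventually_gt_atTop (1 / 2 * (‖l‖ + 1) ^ 2 + |c|)).exists
  exact absurd (hbound n) (not_le.2 hn)

theorem N_fst_ne {u : H × W} (hu : u ∈ NehariPankov J) : u.1 ≠ 0 := by
  intro h0
  have h1 := hu.2.1
  rw [hS.hJ u, h0] at h1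
  simp only [norm_zero] at h1
  have h2 : I u < 0 := by
    have : (0:ℝ) ^ 2 = 0 := by norm_num
    rw [this] at h1; linarith
  exact absurd h2 (not_lt.2 (hS.A1 u))

theorem N_M {u : H × W} (hu : u ∈ NehariPankov J) : u ∈ NatConstraint I := by
  intro v
  have h1 := hu.2.2 0 v
  rw [hS.Jd_apply] at h1
  simp only [zero_smul, zero_add] at h1
  have h2 : (inner ℝ u.1 (((0 : H), v) : H × W).1 : ℝ) = 0 := by
    show (inner ℝ u.1 (0 : H) : ℝ) = 0
    exact inner_zero_right _
  rw [h2] at h1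
  linarith

theorem N_Iu {u : H × W} (hu : u ∈ NehariPankov J) : fderiv ℝ I u u = ‖u.1‖ ^ 2 := by
  have h1 := hu.2.2 1 0
  have h2 : (1 : ℝ) • u + (((0 : H), (0 : W)) : H × W) = u := by
    rw [one_smul]
    have : (((0 : H), (0 : W)) : H × W) = 0 := rfl
    rw [this, add_zero]
  rw [h2, hS.Jd_apply] at h1
  rw [real_inner_self_eq_norm_sq] at h1
  linarith

theorem N_dom_strict {u : H × W} (hu : u ∈ NehariPankov J) {s : ℝ} (hs : 0 ≤ s) (w : W)
    (hne : ((s • u.1, w) : H × W) ≠ u) : J (s • u.1, w) < J u := by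
  have hpe : s • u + (((0 : H), w - s • u.2) : H × W) = ((s • u.1, w) : H × W) := by
    ext
    · show s • u.1 + 0 = s • u.1; rw [add_zero]
    · show s • u.2 + (w - s • u.2) = w; exact add_sub_cancel _ _
  have h3 := hS.B3 u hu s hs (w - s • u.2) (by rw [hpe]; exact hne)
  rw [hS.N_Iu hu, hS.N_M hu (w - s • u.2), hpe] at h3
  have hI : (s ^ 2 - 1) / 2 * ‖u.1‖ ^ 2 + I u < I ((s • u.1, w) : H × W) := by
    have := h3; nlinarith [h3]
  rw [hS.hJ ((s • u.1, w) : H × W), hS.hJ u]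
  have hfst : ‖((s • u.1, w) : H × W).1‖ ^ 2 = s ^ 2 * ‖u.1‖ ^ 2 := by
    show ‖s • u.1‖ ^ 2 = _
    rw [norm_smul, Real.norm_eq_abs, mul_pow, sq_abs]
  rw [hfst]
  have : ((s • u.1, w) : H × W).1 = s • u.1 := rfl
  nlinarith [hI]

theorem N_dom {u : H × W} (hu : u ∈ NehariPankov J) {s : ℝ} (hs : 0 ≤ s) (w : W) :
    J (s • u.1, w) ≤ J u := by
  by_cases hne : ((s • u.1, w) : H × W) = u
  · rw [hne]
  · exact le_of_lt (hS.N_dom_strict hu hs w hne)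

theorem N_ray_unique {u u' : H × W} (hu : u ∈ NehariPankov J) (hu' : u' ∈ NehariPankov J)
    {c : ℝ} (hc : 0 < c) (h1 : u'.1 = c • u.1) : u' = u := by
  by_contra hne
  have e1 : ((c • u.1, u'.2) : H × W) = u' := by
    rw [← h1]
  have l1 : J u' < J u := by
    have := hS.N_dom_strict hu (le_of_lt hc) u'.2 (by rw [e1]; exact hne)
    rwa [e1] at this
  have h2 : u.1 = c⁻¹ • u'.1 := by
    rw [h1, smul_smul, inv_mul_cancel₀ (ne_of_gt hc), one_smul]
  have e2 : ((c⁻¹ • u'.1, u.2) : H × W) = u := by rw [← h2]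
  have l2 : J u < J u' := by
    have := hS.N_dom_strict hu' (le_of_lt (inv_pos.2 hc)) u.2
      (by rw [e2]; exact fun hh => hne hh.symm)
    rwa [e2] at this
  linarith

theorem N_val {u : H × W} (hu : u ∈ NehariPankov J) : J u = hS.Jh u.1 := by
  have h1 := hS.mem_M_iff.1 (hS.N_M hu)
  conv_lhs => rw [h1]
  exact hS.J_md u.1

theorem N_ge_a {u : H × W} (hu : u ∈ NehariPankov J) : a ≤ J u := by
  have hne := hS.N_fst_ne hu
  have hnpos : 0 < ‖u.1‖ := norm_pos_iff.2 hne
  set s := r / ‖u.1‖ with hsdef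
  have hs0 : 0 < s := div_pos hS.hr hnpos
  have hnorm : ‖s • u.1‖ = r := by
    rw [norm_smul, Real.norm_eq_abs, abs_of_pos hs0, hsdef, div_mul_cancel₀ _ (ne_of_gt hnpos)]
  have h1 : a ≤ hS.Jh (s • u.1) := hS.a_le_Jh hnorm
  have h2 : hS.Jh (s • u.1) = J (s • u.1, hS.md (s • u.1)) := (hS.J_md _).symm
  have h3 : J (s • u.1, hS.md (s • u.1)) ≤ J u := hS.N_dom hu (le_of_lt hs0) _
  linarith

theorem ray_max_mem_N {h : H} {sst β : ℝ} (hβ : sst < β) (h0 : 0 < sst)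
    (hmax : ∀ s, s ∈ Set.Icc 0 β → hS.Jh (s • h) ≤ hS.Jh (sst • h))
    (haa : a ≤ hS.Jh (sst • h)) :
    ((sst • h, hS.md (sst • h)) : H × W) ∈ NehariPankov J := by
  set u : H × W := ((sst • h, hS.md (sst • h)) : H × W) with hudef
  have hJu : J u = hS.Jh (sst • h) := hS.J_md _
  have hJupos : 0 < J u := lt_of_lt_of_le hS.hapos (by rw [hJu]; exact haa)
  have hune : u ≠ 0 := by
    intro h0'
    rw [h0', hS.J0] at hJupos
    exact lt_irrefl _ hJupos
  have hη : ∀ t : ℝ, J (t • u) ≤ hS.Jh ((t * sst) • h) := by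
    intro t
    have h1 : t • u = (((t * sst) • h, t • hS.md (sst • h)) : H × W) := by
      rw [hudef]
      ext
      · show t • (sst • h) = (t * sst) • h
        rw [smul_smul]
      · rfl
    rw [h1, hS.hJ]
    have h2 : hS.Ih ((t * sst) • h) ≤ I ((t * sst) • h, t • hS.md (sst • h)) := hS.md_min _ _
    show 1 / 2 * ‖(t * sst) • h‖ ^ 2 - I ((t * sst) • h, t • hS.md (sst • h))
      ≤ 1 / 2 * ‖(t * sst) • h‖ ^ 2 - hS.Ih ((t * sst) • h)
    linarith
  have hloc : IsLocalMax (fun t : ℝ => J (t • u)) 1 := by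
    have hmem1 : (1 : ℝ) ∈ Set.Ioo 0 (β / sst) := ⟨one_pos, (one_lt_div h0).2 hβ⟩
    apply Filter.eventually_of_mem (isOpen_Ioo.mem_nhds hmem1)
    intro t ht
    have hts : t * sst ∈ Set.Icc 0 β := by
      constructor
      · exact le_of_lt (mul_pos ht.1 h0)
      · exact le_of_lt ((lt_div_iff₀ h0).1 ht.2)
    calc J (t • u) ≤ hS.Jh ((t * sst) • h) := hη t
      _ ≤ hS.Jh (sst • h) := hmax _ hts
      _ = J u := hJu.symm
      _ = J ((1 : ℝ) • u) := by rw [one_smul]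
  have hJat : HasFDerivAt J (fderiv ℝ J u) u := by
    have h1 := hS.hJd u
    rwa [← (hS.hJd u).fderiv] at h1
  have hc : HasDerivAt (fun t : ℝ => t • u) u 1 := by
    have := (hasDerivAt_id (1 : ℝ)).smul_const u
    simpa using this
  have hd : HasDerivAt (fun t : ℝ => J (t • u)) (fderiv ℝ J u u) 1 := by
    have he : ((1 : ℝ) • u) = u := one_smul _ _
    have hJat' : HasFDerivAt J (fderiv ℝ J u) ((fun t : ℝ => t • u) 1) := by
      show HasFDerivAt J (fderiv ℝ J u) ((1 : ℝ) • u)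
      rw [he]; exact hJat
    exact hJat'.comp_hasDerivAt 1 hc
  have hfu : fderiv ℝ J u u = 0 := hloc.hasDerivAt_eq_zero hd
  refine ⟨hune, hJupos, ?_⟩
  intro s v
  have hM := hS.md_M (sst • h)
  have hfd : fderiv ℝ J u ((0 : H), v) = 0 := by
    rw [hS.Jd_apply]
    have h2 : (inner ℝ u.1 (((0 : H), v) : H × W).1 : ℝ) = 0 := by
      show (inner ℝ u.1 (0 : H) : ℝ) = 0
      exact inner_zero_right _
    rw [h2, hM v]
    ring
  have hlin : fderiv ℝ J u (s • u + ((0 : H), v))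
      = s * fderiv ℝ J u u + fderiv ℝ J u ((0 : H), v) := by
    rw [map_add, map_smul]
    simp [smul_eq_mul]
  rw [hlin, hfu, hfd]
  ring

theorem exists_ray_max {h : H} (hh : h ≠ 0) :
    ∃ sst : ℝ, 0 < sst ∧ a ≤ hS.Jh (sst • h) ∧
      ∀ s : ℝ, 0 ≤ s → hS.Jh (s • h) ≤ hS.Jh (sst • h) := by
  obtain ⟨S, ε, hS0, hε0, hSS⟩ := hS.B2_cons hh a
  have hBig : ∀ s, S ≤ s → hS.Jh (s • h) < a := fun s hs =>
    hSS h (by simpa using hε0) s hs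
  have hhn : 0 < ‖h‖ := norm_pos_iff.2 hh
  set sr : ℝ := r / ‖h‖ with hsrdef
  have hsr0 : 0 < sr := div_pos hS.hr hhn
  have hsrn : ‖sr • h‖ = r := by
    rw [norm_smul, Real.norm_eq_abs, abs_of_pos hsr0, hsrdef,
      div_mul_cancel₀ _ (ne_of_gt hhn)]
  have hsra : a ≤ hS.Jh (sr • h) := hS.a_le_Jh hsrn
  set S' : ℝ := max S sr with hS'def
  have hS'sr : sr ≤ S' := le_max_right _ _
  have hcont : ContinuousOn (fun s : ℝ => hS.Jh (s • h)) (Set.Icc 0 S') :=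
    (hS.Jh_cont.comp (continuous_id.smul continuous_const)).continuousOn
  have hne2 : (Set.Icc (0 : ℝ) S').Nonempty :=
    ⟨0, le_rfl, le_trans (le_of_lt hsr0) hS'sr⟩
  obtain ⟨sst, hsstmem, hsstmax⟩ := isCompact_Icc.exists_isMaxOn hne2 hcont
  have hsta : a ≤ hS.Jh (sst • h) :=
    le_trans hsra (hsstmax ⟨le_of_lt hsr0, hS'sr⟩)
  have hst0 : 0 < sst := by
    rcases lt_or_eq_of_le hsstmem.1 with h1 | h1
    · exact h1
    · exfalso
      rw [← h1, zero_smul, hS.Jh0] at hsta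
      linarith [hS.hapos]
  refine ⟨sst, hst0, hsta, ?_⟩
  intro s hs0
  by_cases hsS : s ≤ S'
  · exact hsstmax ⟨hs0, hsS⟩
  · push_neg at hsS
    have := hBig s (le_trans (le_max_left _ _) (le_of_lt hsS))
    linarith

open Classical in
noncomputable def sstar (h : H) : ℝ :=
  if hh : h = (0 : H) then 0 else (hS.exists_ray_max hh).choose

theorem sstar_pos {h : H} (hh : h ≠ 0) : 0 < hS.sstar h := by
  rw [sstar, dif_neg hh]; exact (hS.exists_ray_max hh).choose_spec.1

theorem sstar_a {h : H} (hh : h ≠ 0) : a ≤ hS.Jh (hS.sstar h • h) := by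
  rw [sstar, dif_neg hh]; exact (hS.exists_ray_max hh).choose_spec.2.1

theorem sstar_max {h : H} (hh : h ≠ 0) :
    ∀ s : ℝ, 0 ≤ s → hS.Jh (s • h) ≤ hS.Jh (hS.sstar h • h) := by
  rw [sstar, dif_neg hh]; exact (hS.exists_ray_max hh).choose_spec.2.2

theorem sstar_mem_N {h : H} (hh : h ≠ 0) :
    ((hS.sstar h • h, hS.md (hS.sstar h • h)) : H × W) ∈ NehariPankov J :=
  hS.ray_max_mem_N (lt_add_one _) (hS.sstar_pos hh)
    (fun s hs => hS.sstar_max hh s hs.1) (hS.sstar_a hh)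

theorem sstar_eq {h : H} (hh : h ≠ 0) {s : ℝ} (h0 : 0 < s) (hA : a ≤ hS.Jh (s • h))
    (hMx : ∀ s' : ℝ, 0 ≤ s' → hS.Jh (s' • h) ≤ hS.Jh (s • h)) : s = hS.sstar h := by
  have hu1 : ((s • h, hS.md (s • h)) : H × W) ∈ NehariPankov J :=
    hS.ray_max_mem_N (lt_add_one _) h0 (fun s' hs' => hMx s' hs'.1) hA
  have hu2 := hS.sstar_mem_N hh
  have hsp := hS.sstar_pos hh
  have hc : 0 < s / hS.sstar h := div_pos h0 hsp
  have h1 : ((s • h, hS.md (s • h)) : H × W).1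
      = (s / hS.sstar h) • ((hS.sstar h • h, hS.md (hS.sstar h • h)) : H × W).1 := by
    show s • h = (s / hS.sstar h) • (hS.sstar h • h)
    rw [smul_smul, div_mul_cancel₀ _ (ne_of_gt hsp)]
  have heq := hS.N_ray_unique hu2 hu1 hc h1
  have h2 : s • h = hS.sstar h • h := congrArg Prod.fst heq
  by_contra hne
  have h4 : (s - hS.sstar h) • h = 0 := by rw [sub_smul, h2, sub_self]
  rcases smul_eq_zero.1 h4 with h5 | h5
  · exact hne (by linarith [sub_eq_zero.1 h5])
  · exact hh h5

theorem sstar_sq {h : H} (hh : h ≠ 0) : 2 * a ≤ hS.sstar h ^ 2 * ‖h‖ ^ 2 := by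
  have h1 := hS.sstar_a hh
  have h2 := hS.Jh_le (hS.sstar h • h)
  have h3 : ‖hS.sstar h • h‖ ^ 2 = hS.sstar h ^ 2 * ‖h‖ ^ 2 := by
    rw [norm_smul, Real.norm_eq_abs, mul_pow, sq_abs]
  nlinarith [h1, h2]

theorem sstar_tendsto {h : ℕ → H} {l : H} (hl : l ≠ 0) (hn : ∀ n, h n ≠ 0)
    (hc : Tendsto h atTop (𝓝 l)) :
    Tendsto (fun n => hS.sstar (h n)) atTop (𝓝 (hS.sstar l)) := by
  apply tendsto_of_subseq_tendsto
  intro ns hns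
  have hcg : Tendsto (fun n => h (ns n)) atTop (𝓝 l) := hc.comp hns
  obtain ⟨S, ε, hS0, hε0, hSS⟩ := hS.B2_cons hl a
  have hev : ∀ᶠ n in atTop, ‖h (ns n) - l‖ < ε := by
    have h2 : Tendsto (fun n => ‖h (ns n) - l‖) atTop (𝓝 0) :=
      tendsto_iff_norm_sub_tendsto_zero.1 hcg
    exact h2.eventually_lt_const hε0
  have hsS : ∀ᶠ n in atTop, hS.sstar (h (ns n)) ≤ S := by
    filter_upwards [hev] with n hn2
    by_contra hgt
    push_neg at hgt
    have h3 := hSS (h (ns n)) hn2 (hS.sstar (h (ns n))) (le_of_lt hgt)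
    have h4 := hS.sstar_a (hn (ns n))
    linarith
  obtain ⟨N₀, hN₀⟩ := Filter.eventually_atTop.1 hsS
  have hmem : ∀ k : ℕ, hS.sstar (h (ns (N₀ + k))) ∈ Set.Icc (0 : ℝ) S := fun k =>
    ⟨le_of_lt (hS.sstar_pos (hn _)), hN₀ _ (Nat.le_add_right _ _)⟩
  obtain ⟨sbar, _, ms, hms, hmstend⟩ :=
    tendsto_subseq_of_bounded (Metric.isBounded_Icc (0 : ℝ) S) hmem
  set idx : ℕ → ℕ := fun k => N₀ + ms k with hidx
  have hidxt : Tendsto idx atTop atTop :=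
    tendsto_atTop_mono (fun k => Nat.le_add_left _ _) hms.tendsto_atTop
  have hgi : Tendsto (fun k => h (ns (idx k))) atTop (𝓝 l) := hcg.comp hidxt
  have hsi : Tendsto (fun k => hS.sstar (h (ns (idx k)))) atTop (𝓝 sbar) := hmstend
  have hJsi : Tendsto (fun k => hS.Jh (hS.sstar (h (ns (idx k))) • h (ns (idx k)))) atTop
      (𝓝 (hS.Jh (sbar • l))) := (hS.Jh_cont.tendsto _).comp (hsi.smul hgi)
  have hA : a ≤ hS.Jh (sbar • l) :=
    ge_of_tendsto hJsi (Filter.Eventually.of_forall fun k => hS.sstar_a (hn _))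
  have hMx : ∀ s' : ℝ, 0 ≤ s' → hS.Jh (s' • l) ≤ hS.Jh (sbar • l) := by
    intro s' hs'
    have h1 : Tendsto (fun k => hS.Jh (s' • h (ns (idx k)))) atTop (𝓝 (hS.Jh (s' • l))) :=
      (hS.Jh_cont.tendsto _).comp (tendsto_const_nhds.smul hgi)
    exact le_of_tendsto_of_tendsto' h1 hJsi fun k => hS.sstar_max (hn _) s' hs'
  have hsbar0 : 0 < sbar := by
    rcases lt_or_eq_of_le (ge_of_tendsto hsi
      (Filter.Eventually.of_forall fun k => le_of_lt (hS.sstar_pos (hn _)))) with hx | hx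
    · exact hx
    · exfalso
      rw [← hx, zero_smul, hS.Jh0] at hA
      linarith [hS.hapos]
  have heq := hS.sstar_eq hl hsbar0 hA hMx
  exact ⟨idx, by rw [← heq]; exact hsi⟩

theorem crossing (γ : ℝ → H × W) (hγc : ContinuousOn γ (Set.Icc 0 1))
    (hγM : ∀ t ∈ Set.Icc (0 : ℝ) 1, γ t ∈ NatConstraint I)
    (hγ0 : γ 0 = 0) (hγr : r < ‖(γ 1).1‖) (hγJ : J (γ 1) < 0) :
    ∃ t₀ ∈ Set.Icc (0 : ℝ) 1, γ t₀ ∈ NehariPankov J := by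
  classical
  set gH : ℝ → H := fun t => (γ t).1 with hgHdef
  have hgHc : ContinuousOn gH (Set.Icc 0 1) := continuous_fst.comp_continuousOn hγc
  have hγval : ∀ t ∈ Set.Icc (0 : ℝ) 1, γ t = ((gH t, hS.md (gH t)) : H × W) := fun t ht =>
    hS.mem_M_iff.1 (hγM t ht)
  have hJval : ∀ t ∈ Set.Icc (0 : ℝ) 1, J (γ t) = hS.Jh (gH t) := by
    intro t ht; rw [hγval t ht]; exact hS.J_md _
  have h01 : (0 : ℝ) ∈ Set.Icc (0 : ℝ) 1 := ⟨le_rfl, zero_le_one⟩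
  have h11 : (1 : ℝ) ∈ Set.Icc (0 : ℝ) 1 := ⟨zero_le_one, le_rfl⟩
  have hgH0 : gH 0 = 0 := by rw [hgHdef]; show (γ 0).1 = 0; rw [hγ0]; rfl
  have hgH1ne : gH 1 ≠ 0 := by
    intro h0
    show False
    have : r < ‖gH 1‖ := hγr
    rw [h0, norm_zero] at this
    linarith [hS.hr]
  have hB1mem : hS.sstar (gH 1) ≤ 1 := by
    by_contra hgt
    push_neg at hgt
    set h₁ := gH 1 with hh₁
    have hcont : ContinuousOn (fun s : ℝ => hS.Jh (s • h₁)) (Set.Icc 0 1) :=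
      (hS.Jh_cont.comp (continuous_id.smul continuous_const)).continuousOn
    obtain ⟨s₁, hs₁mem, hs₁max⟩ := isCompact_Icc.exists_isMaxOn ⟨0, h01⟩ hcont
    have hn1 : 0 < ‖h₁‖ := norm_pos_iff.2 hgH1ne
    set sr : ℝ := r / ‖h₁‖ with hsrdef
    have hsr0 : 0 < sr := div_pos hS.hr hn1
    have hsr1 : sr ≤ 1 := by
      rw [hsrdef, div_le_one hn1]; exact le_of_lt hγr
    have hsrn : ‖sr • h₁‖ = r := by
      rw [norm_smul, Real.norm_eq_abs, abs_of_pos hsr0, hsrdef,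
        div_mul_cancel₀ _ (ne_of_gt hn1)]
    have hs₁a : a ≤ hS.Jh (s₁ • h₁) :=
      le_trans (hS.a_le_Jh hsrn) (hs₁max ⟨le_of_lt hsr0, hsr1⟩)
    have hJ1 : hS.Jh ((1 : ℝ) • h₁) < 0 := by
      rw [one_smul, hh₁, ← hJval 1 h11]
      exact hγJ
    have hs₁0 : 0 < s₁ := by
      rcases lt_or_eq_of_le hs₁mem.1 with hx | hx
      · exact hx
      · exfalso; rw [← hx, zero_smul, hS.Jh0] at hs₁a; linarith [hS.hapos]
    have hs₁lt1 : s₁ < 1 := by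
      rcases lt_or_eq_of_le hs₁mem.2 with hx | hx
      · exact hx
      · exfalso; rw [hx] at hs₁a; linarith [hJ1, hS.hapos]
    have hu1 : ((s₁ • h₁, hS.md (s₁ • h₁)) : H × W) ∈ NehariPankov J :=
      hS.ray_max_mem_N hs₁lt1 hs₁0 (fun s hs => hs₁max hs) hs₁a
    have hu2 := hS.sstar_mem_N hgH1ne
    have hc : 0 < s₁ / hS.sstar h₁ := div_pos hs₁0 (hS.sstar_pos hgH1ne)
    have h1 : ((s₁ • h₁, hS.md (s₁ • h₁)) : H × W).1
        = (s₁ / hS.sstar h₁) • ((hS.sstar h₁ • h₁, hS.md (hS.sstar h₁ • h₁)) : H × W).1 := by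
      show s₁ • h₁ = (s₁ / hS.sstar h₁) • (hS.sstar h₁ • h₁)
      rw [smul_smul, div_mul_cancel₀ _ (ne_of_gt (hS.sstar_pos hgH1ne))]
    have heq := hS.N_ray_unique hu2 hu1 hc h1
    have h2 : s₁ • h₁ = hS.sstar h₁ • h₁ := congrArg Prod.fst heq
    have h4 : (s₁ - hS.sstar h₁) • h₁ = 0 := by rw [sub_smul, h2, sub_self]
    rcases smul_eq_zero.1 h4 with h5 | h5
    · have h6 : s₁ = hS.sstar h₁ := by linarith [sub_eq_zero.1 h5]
      rw [h6] at hs₁lt1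
      linarith
    · exact hgH1ne h5
  set B : Set ℝ := {t | t ∈ Set.Icc (0 : ℝ) 1 ∧ gH t ≠ 0 ∧ hS.sstar (gH t) ≤ 1} with hBdef
  have h1B : (1 : ℝ) ∈ B := ⟨h11, hgH1ne, hB1mem⟩
  have hBnorm : ∀ t ∈ B, 2 * a ≤ ‖gH t‖ ^ 2 := by
    intro t ht
    have h1 := hS.sstar_sq ht.2.1
    have hsp := hS.sstar_pos ht.2.1
    have h2 : hS.sstar (gH t) ^ 2 ≤ 1 := by nlinarith [ht.2.2]
    nlinarith [sq_nonneg ‖gH t‖]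
  have hBclosed : IsClosed B := by
    apply IsSeqClosed.isClosed
    intro tn t htn hlim
    have htmem : t ∈ Set.Icc (0 : ℝ) 1 :=
      isClosed_Icc.mem_of_tendsto hlim (Filter.Eventually.of_forall fun n => (htn n).1)
    have hgHt : Tendsto (fun n => gH (tn n)) atTop (𝓝 (gH t)) := by
      have hcw : ContinuousWithinAt gH (Set.Icc 0 1) t := hgHc t htmem
      exact hcw.tendsto.comp (tendsto_nhdsWithin_iff.2
        ⟨hlim, Filter.Eventually.of_forall fun n => (htn n).1⟩)
    have hgHtne : gH t ≠ 0 := by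
      intro h0
      have h2 : Tendsto (fun n => ‖gH (tn n)‖ ^ 2) atTop (𝓝 (‖gH t‖ ^ 2)) :=
        ((continuous_norm.pow 2).tendsto _).comp hgHt
      rw [h0, norm_zero] at h2
      have h3 := ge_of_tendsto h2 (Filter.Eventually.of_forall fun n => hBnorm _ (htn n))
      have h4 : (0 : ℝ) ^ 2 = 0 := by norm_num
      rw [h4] at h3
      linarith [hS.hapos]
    refine ⟨htmem, hgHtne, ?_⟩
    have hsst := hS.sstar_tendsto hgHtne (fun n => (htn n).2.1) hgHt
    exact le_of_tendsto hsst (Filter.Eventually.of_forall fun n => (htn n).2.2)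
  have hBne : B.Nonempty := ⟨1, h1B⟩
  have hBbdd : BddBelow B := ⟨0, fun t ht => ht.1.1⟩
  set t₀ : ℝ := sInf B with ht₀def
  have ht₀B : t₀ ∈ B := hBclosed.csInf_mem hBne hBbdd
  have ht₀mem : t₀ ∈ Set.Icc (0 : ℝ) 1 := ht₀B.1
  have ht₀ne : gH t₀ ≠ 0 := ht₀B.2.1
  have ht₀le : hS.sstar (gH t₀) ≤ 1 := ht₀B.2.2
  have ht₀pos : 0 < t₀ := by
    rcases lt_or_eq_of_le ht₀mem.1 with hx | hx
    · exact hx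
    · exfalso
      apply ht₀ne
      rw [← hx]
      exact hgH0
  have hge1 : 1 ≤ hS.sstar (gH t₀) := by
    set tn : ℕ → ℝ := fun n => t₀ - t₀ / (n + 2) with htndef
    have htn_lt : ∀ n, tn n < t₀ := by
      intro n
      have h2 : 0 < t₀ / ((n : ℝ) + 2) := by positivity
      show t₀ - t₀ / ((n : ℝ) + 2) < t₀
      linarith
    have htn_mem : ∀ n, tn n ∈ Set.Icc (0 : ℝ) 1 := by
      intro n
      have hn2 : (1 : ℝ) ≤ (n : ℝ) + 2 := by linarith [Nat.cast_nonneg (α := ℝ) n]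
      constructor
      · show 0 ≤ t₀ - t₀ / ((n : ℝ) + 2)
        have h2 : t₀ / ((n : ℝ) + 2) ≤ t₀ := by
          rw [div_le_iff₀ (by positivity)]
          nlinarith [ht₀pos]
        linarith
      · show t₀ - t₀ / ((n : ℝ) + 2) ≤ 1
        have h2 : 0 < t₀ / ((n : ℝ) + 2) := by positivity
        linarith [ht₀mem.2]
    have htn_tend : Tendsto tn atTop (𝓝 t₀) := by
      have h1 : Tendsto (fun n : ℕ => t₀ / ((n : ℝ) + 2)) atTop (𝓝 0) := by
        apply Tendsto.div_atTop tendsto_const_nhds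
        exact tendsto_atTop_add_const_right _ _ tendsto_natCast_atTop_atTop
      have h2 : Tendsto (fun n : ℕ => t₀ - t₀ / ((n : ℝ) + 2)) atTop (𝓝 (t₀ - 0)) :=
        Filter.Tendsto.sub tendsto_const_nhds h1
      simpa using h2
    have hgHtn : Tendsto (fun n => gH (tn n)) atTop (𝓝 (gH t₀)) := by
      have hcw : ContinuousWithinAt gH (Set.Icc 0 1) t₀ := hgHc t₀ ht₀mem
      exact hcw.tendsto.comp (tendsto_nhdsWithin_iff.2
        ⟨htn_tend, Filter.Eventually.of_forall htn_mem⟩)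
    have hnotB : ∀ n, tn n ∉ B := fun n hmem =>
      absurd (csInf_le hBbdd hmem) (not_le.2 (htn_lt n))
    have hevne : ∀ᶠ n in atTop, gH (tn n) ≠ 0 := by
      have h2 : Tendsto (fun n => ‖gH (tn n)‖) atTop (𝓝 ‖gH t₀‖) := hgHtn.norm
      have h3 : 0 < ‖gH t₀‖ := norm_pos_iff.2 ht₀ne
      filter_upwards [h2.eventually_const_lt h3] with n hn2
      exact fun h0 => by rw [h0, norm_zero] at hn2; linarith
    have hevgt : ∀ᶠ n in atTop, 1 < hS.sstar (gH (tn n)) := by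
      filter_upwards [hevne] with n hne2
      have h5 := hnotB n
      rw [hBdef] at h5
      simp only [Set.mem_setOf_eq, not_and, not_le] at h5
      exact h5 (htn_mem n) hne2
    obtain ⟨N, hN⟩ := Filter.eventually_atTop.1 (hevne.and hevgt)
    have hidxt : Tendsto (fun k : ℕ => N + k) atTop atTop :=
      tendsto_atTop_mono (fun k => Nat.le_add_left _ _) tendsto_id
    have h4 := hS.sstar_tendsto ht₀ne (fun k => (hN _ (Nat.le_add_right _ _)).1)
      (hgHtn.comp hidxt)
    exact ge_of_tendsto h4
      (Filter.Eventually.of_forall fun k => le_of_lt (hN _ (Nat.le_add_right _ _)).2)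
  have hsst1 : hS.sstar (gH t₀) = 1 := le_antisymm ht₀le hge1
  have hmem := hS.sstar_mem_N ht₀ne
  rw [hsst1, one_smul] at hmem
  refine ⟨t₀, ht₀mem, ?_⟩
  rw [hγval t₀ ht₀mem]
  exact hmem

theorem path_le {u : H × W} (hu : u ∈ NehariPankov J) :
    ∃ γ : ℝ → H × W, ContinuousOn γ (Set.Icc 0 1) ∧
      (∀ t ∈ Set.Icc (0 : ℝ) 1, γ t ∈ NatConstraint I) ∧ γ 0 = 0 ∧ r < ‖(γ 1).1‖ ∧
      J (γ 1) < 0 ∧ ∀ x ∈ J '' (γ '' Set.Icc (0 : ℝ) 1), x ≤ J u := by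
  have hne := hS.N_fst_ne hu
  have hnpos : 0 < ‖u.1‖ := norm_pos_iff.2 hne
  obtain ⟨S, ε, hS0, hε0, hSS⟩ := hS.B2_cons hne 0
  have hBig : ∀ s : ℝ, S ≤ s → hS.Jh (s • u.1) < 0 := fun s hs =>
    hSS u.1 (by simpa using hε0) s hs
  set T : ℝ := max S ((r + 1) / ‖u.1‖) with hT
  have hT1 : S ≤ T := le_max_left _ _
  have hT2 : (r + 1) / ‖u.1‖ ≤ T := le_max_right _ _
  have hTpos : 0 < T := lt_of_lt_of_le (div_pos (by linarith [hS.hr]) hnpos) hT2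
  set γ : ℝ → H × W := fun t => (((t * T) • u.1, hS.md ((t * T) • u.1)) : H × W) with hγ
  have hcont : Continuous γ :=
    hS.md_cont.comp ((continuous_id.mul continuous_const).smul continuous_const)
  refine ⟨γ, hcont.continuousOn, fun t _ => hS.md_M _, ?_, ?_, ?_, ?_⟩
  · show (((0 * T) • u.1, hS.md ((0 * T) • u.1)) : H × W) = 0
    rw [zero_mul, zero_smul, hS.md0]
    rfl
  · show r < ‖(1 * T) • u.1‖
    rw [one_mul, norm_smul, Real.norm_eq_abs, abs_of_pos hTpos]
    have h3 : r + 1 ≤ T * ‖u.1‖ := (div_le_iff₀ hnpos).1 hT2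
    linarith
  · show J ((1 * T) • u.1, hS.md ((1 * T) • u.1)) < 0
    rw [hS.J_md, one_mul]
    exact hBig T hT1
  · rintro x ⟨p, ⟨t, ht, rfl⟩, rfl⟩
    show J (((t * T) • u.1, hS.md ((t * T) • u.1)) : H × W) ≤ J u
    exact hS.N_dom hu (mul_nonneg ht.1 (le_of_lt hTpos)) _


end GS


/-- **Theorem 4.6 d).** Under (A1)-(A4), (B1)-(B4), the mountain pass value over the
constraint `M` equals the infimum of `J` over the Nehari–Pankov set: `c_M = c_N`. -/
theorem statement8
    (I J : H × W → ℝ)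
    (hWrefl : Function.Surjective (NormedSpace.inclusionInDoubleDual ℝ W))
    (hJ : ∀ u : H × W, J u = 1 / 2 * ‖u.1‖ ^ 2 - I u)
    -- (A1)
    (hIC1 : ContDiff ℝ 1 I) (hA1 : ∀ u : H × W, 0 ≤ I u) (hI0 : I 0 = 0)
    -- (A2)
    (hA2 : ∀ (u : ℕ → H × W) (l : H × W), TConv u l →
      I l ≤ Filter.liminf (fun n => I (u n)) atTop)
    -- (A3)
    (hA3 : ∀ (u : ℕ → H × W) (l : H × W), TConv u l →
      Tendsto (fun n => I (u n)) atTop (𝓝 (I l)) → Tendsto u atTop (𝓝 l))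
    -- (A4)
    (r a : ℝ) (hr : 0 < r)
    (ha : a = sInf {c : ℝ | ∃ h : H, ‖h‖ = r ∧ c = J (h, (0 : W))}) (hapos : 0 < a)
    -- (B1)
    (hB1 : ∀ u : ℕ → H × W, Tendsto (fun n => ‖u n‖) atTop atTop →
      Tendsto (fun n => ‖(u n).1‖ + I (u n)) atTop atTop)
    -- (B2)
    (hB2 : ∀ (t : ℕ → ℝ) (u : ℕ → H × W) (u₀ : H), u₀ ≠ 0 → Tendsto t atTop atTop →
      Tendsto (fun n => (u n).1) atTop (𝓝 u₀) →
      Tendsto (fun n => I (t n • u n) / t n ^ 2) atTop atTop)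
    -- (B3)
    (hB3 : ∀ u ∈ NehariPankov J, ∀ t : ℝ, 0 ≤ t → ∀ v : W, t • u + ((0 : H), v) ≠ u →
      (t ^ 2 - 1) / 2 * fderiv ℝ I u u + t * fderiv ℝ I u ((0 : H), v)
        + I u - I (t • u + ((0 : H), v)) < 0)
    -- (B4)
    (hB4 : ∀ u ∈ NatConstraint I, ∀ v : W, v ≠ 0 → I u < I (u + ((0 : H), v)))
    -- the mountain pass value over the constraint `M`
    (cM : ℝ)
    (hcM : cM = sInf ((fun γ : ℝ → H × W => sSup (J '' (γ '' Set.Icc (0 : ℝ) 1))) ''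
      {γ : ℝ → H × W | ContinuousOn γ (Set.Icc 0 1) ∧
        (∀ t ∈ Set.Icc (0 : ℝ) 1, γ t ∈ NatConstraint I) ∧
        γ 0 = 0 ∧ r < ‖(γ 1).1‖ ∧ J (γ 1) < 0})) :
    cM = sInf (J '' NehariPankov J) := by
  have hGS : GS I J r a :=
    ⟨hWrefl, hJ, hIC1, hA1, hI0, hA2, hA3, hr, ha, hapos, hB1, hB2, hB3, hB4⟩
  set Γset : Set (ℝ → H × W) := {γ : ℝ → H × W | ContinuousOn γ (Set.Icc 0 1) ∧
      (∀ t ∈ Set.Icc (0 : ℝ) 1, γ t ∈ NatConstraint I) ∧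
      γ 0 = 0 ∧ r < ‖(γ 1).1‖ ∧ J (γ 1) < 0} with hΓdef
  set SM : Set ℝ := (fun γ : ℝ → H × W => sSup (J '' (γ '' Set.Icc (0 : ℝ) 1))) '' Γset
    with hSMdef
  set SN : Set ℝ := J '' NehariPankov J with hSNdef
  -- N is nonempty
  obtain ⟨h₀, hh₀r⟩ := hGS.exists_sphere
  have hh₀ne : h₀ ≠ 0 := by
    intro h0
    rw [h0, norm_zero] at hh₀r
    linarith
  have hNne : (NehariPankov J).Nonempty := ⟨_, hGS.sstar_mem_N hh₀ne⟩
  have hSNne : SN.Nonempty := hNne.image J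
  have hSNbdd : BddBelow SN := by
    refine ⟨a, ?_⟩
    rintro x ⟨u, hu, rfl⟩
    exact hGS.N_ge_a hu
  -- path sups are compact images, hence bddAbove
  have hbddAbove : ∀ γ ∈ Γset, BddAbove (J '' (γ '' Set.Icc (0 : ℝ) 1)) := by
    intro γ hγ
    exact (((isCompact_Icc).image_of_continuousOn hγ.1).image hGS.Jcont).bddAbove
  have hImne : ∀ γ : ℝ → H × W, (J '' (γ '' Set.Icc (0 : ℝ) 1)).Nonempty := by
    intro γ
    exact ((Set.nonempty_Icc.2 zero_le_one).image γ).image J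
  -- every path sup is ≥ a  (via IVT through the sphere of radius r)
  have hSM_ge : ∀ x ∈ SM, a ≤ x := by
    rintro x ⟨γ, hγ, rfl⟩
    obtain ⟨hγc, hγM, hγ0, hγr, hγJ⟩ := hγ
    have hnormc : ContinuousOn (fun t => ‖(γ t).1‖) (Set.Icc 0 1) :=
      (continuous_norm.comp continuous_fst).comp_continuousOn hγc
    have hmemr : r ∈ Set.Icc ‖(γ 0).1‖ ‖(γ 1).1‖ := by
      constructor
      · rw [hγ0]
        show r ≥ ‖(0 : H × W).1‖
        rw [Prod.fst_zero, norm_zero]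
        exact le_of_lt hr
      · exact le_of_lt hγr
    obtain ⟨t₁, ht₁, hft₁⟩ := intermediate_value_Icc zero_le_one hnormc hmemr
    have hJt₁ : J (γ t₁) = hGS.Jh ((γ t₁).1) := by
      rw [hGS.mem_M_iff.1 (hγM t₁ ht₁)]
      exact hGS.J_md _
    have ha1 : a ≤ J (γ t₁) := by
      rw [hJt₁]
      exact hGS.a_le_Jh hft₁
    have hmem : J (γ t₁) ∈ J '' (γ '' Set.Icc (0 : ℝ) 1) :=
      Set.mem_image_of_mem J (Set.mem_image_of_mem γ ht₁)
    exact le_trans ha1 (le_csSup (hbddAbove γ ⟨hγc, hγM, hγ0, hγr, hγJ⟩) hmem)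
  have hSMbdd : BddBelow SM := ⟨a, hSM_ge⟩
  -- c_M ≤ J u for every u ∈ N
  have hcMle : ∀ u ∈ NehariPankov J, sInf SM ≤ J u := by
    intro u hu
    obtain ⟨γ, hγc, hγM, hγ0, hγr, hγJ, hle⟩ := hGS.path_le hu
    have hγmem : γ ∈ Γset := ⟨hγc, hγM, hγ0, hγr, hγJ⟩
    have hsup_le : sSup (J '' (γ '' Set.Icc (0 : ℝ) 1)) ≤ J u :=
      csSup_le (hImne γ) hle
    exact le_trans (csInf_le hSMbdd ⟨γ, hγmem, rfl⟩) hsup_le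
  have hSMne : SM.Nonempty := by
    obtain ⟨u, hu⟩ := hNne
    obtain ⟨γ, hγc, hγM, hγ0, hγr, hγJ, -⟩ := hGS.path_le hu
    exact ⟨_, ⟨γ, ⟨hγc, hγM, hγ0, hγr, hγJ⟩, rfl⟩⟩
  -- c_N ≤ every path sup  (via the crossing lemma)
  have hcNle : ∀ x ∈ SM, sInf SN ≤ x := by
    rintro x ⟨γ, hγ, rfl⟩
    obtain ⟨hγc, hγM, hγ0, hγr, hγJ⟩ := hγ
    obtain ⟨t₀, ht₀, ht₀N⟩ := hGS.crossing γ hγc hγM hγ0 hγr hγJ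
    have h1 : sInf SN ≤ J (γ t₀) := csInf_le hSNbdd ⟨_, ht₀N, rfl⟩
    have h2 : J (γ t₀) ≤ sSup (J '' (γ '' Set.Icc (0 : ℝ) 1)) :=
      le_csSup (hbddAbove γ ⟨hγc, hγM, hγ0, hγr, hγJ⟩)
        (Set.mem_image_of_mem J (Set.mem_image_of_mem γ ht₀))
    exact le_trans h1 h2
  have le1 : sInf SM ≤ sInf SN := by
    apply le_csInf hSNne
    rintro b ⟨u, hu, rfl⟩
    exact hcMle u hu
  have le2 : sInf SN ≤ sInf SM := le_csInf hSMne hcNle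
  rw [hcM]
  exact le_antisymm le1 le2
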